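/- arXiv:1202.1237 — 2 statements merged into one kernel-verified Lean document; each statement's English description precedes it below -/
import Mathlib

section
/- Let p be an odd prime and t a p-integral rational with t \not\equiv 0 (mod p). Let n = \langle -1/8 \rangle_p be the residue of -1/8 modulo p. Then \sum_{k=0}^{p-1} \binom{-1/8}{k} \binom{-3/8}{k} (1-t)^k \equiv t^n \sum_{k=0}^{p-1} \binom{-1/8}{k} \binom{-5/8}{k} (1 - 1/t)^k (mod p). -/
/-- The generalized binomial coefficient `a(a-1)⋯(a-k+1)/k!`. -/
def gchoose (a : ℚ) (k : ℕ) : ℚ :=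
  (∏ i ∈ Finset.range k, (a - i)) / (Nat.factorial k)

/-- A rational number is `p`-integral if `p` does not divide its denominator. -/
def pInt (p : ℕ) (r : ℚ) : Prop := ¬ (p ∣ r.den)

/-- Congruence modulo `p` in the ring of `p`-integral rationals:
`r ≡ s (mod p)` iff `r - s = p·c` for some `p`-integral rational `c`. -/
def pCong (p : ℕ) (r s : ℚ) : Prop := ∃ c : ℚ, pInt p c ∧ r - s = p * c

namespace SumEighth

open Finset

/-- Reduction of a rational mod `p`. -/
noncomputable def phi (p : ℕ) [Fact p.Prime] (q : ℚ) : ZMod p :=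
  (q.num : ZMod p) / (q.den : ZMod p)

/-- `q` has denominator invertible mod `p`. -/
def D (p : ℕ) (q : ℚ) : Prop := ((q.den : ℕ) : ZMod p) ≠ 0

variable {p : ℕ} [hpf : Fact p.Prime]

lemma D_iff_pInt (q : ℚ) : D p q ↔ pInt p q := by
  unfold D pInt
  rw [Ne, ZMod.natCast_eq_zero_iff]

lemma mul_den (q : ℚ) : q * (q.den : ℚ) = (q.num : ℚ) := by
  have hd : (q.den : ℚ) ≠ 0 := by exact_mod_cast q.den_ne_zero
  have h := Rat.num_div_den q
  rw [div_eq_iff hd] at h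
  exact h.symm

lemma phi_eq {q : ℚ} {a b : ℤ} (hqb : q * (b : ℚ) = (a : ℚ)) (hb : ((b : ℤ) : ZMod p) ≠ 0) :
    D p q ∧ phi p q = (a : ZMod p) / (b : ZMod p) := by
  have hb0 : b ≠ 0 := by rintro rfl; simp at hb
  have hbq : (b : ℚ) ≠ 0 := Int.cast_ne_zero.mpr hb0
  have hq : q = (a : ℚ) / (b : ℚ) := by
    field_simp
    linarith [hqb]
  have hdvd : ((q.den : ℤ)) ∣ b := by
    have h1 : q = Rat.divInt a b := by rw [Rat.divInt_eq_div]; exact hq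
    rw [h1]; exact Rat.den_dvd a b
  obtain ⟨c, hc⟩ := hdvd
  have hD : D p q := by
    intro h0
    apply hb
    have h2 : ((b : ℤ) : ZMod p) = ((q.den : ℤ) : ZMod p) * ((c : ℤ) : ZMod p) := by
      rw [← Int.cast_mul, ← hc]
    have h3 : ((q.den : ℤ) : ZMod p) = ((q.den : ℕ) : ZMod p) := by push_cast; ring
    rw [h2, h3, h0, zero_mul]
  refine ⟨hD, ?_⟩
  have hZ : q.num * b = a * (q.den : ℤ) := by
    have hq' : (q.num : ℚ) * (b : ℚ) = (a : ℚ) * (q.den : ℚ) := by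
      have hmd := mul_den q
      calc (q.num : ℚ) * b = (q * q.den) * b := by rw [hmd]
        _ = (q * b) * q.den := by ring
        _ = a * q.den := by rw [hqb]
    exact_mod_cast hq'
  have hZp : (q.num : ZMod p) * ((b : ℤ) : ZMod p)
      = ((a : ℤ) : ZMod p) * ((q.den : ℕ) : ZMod p) := by
    have h4 := congrArg (fun z : ℤ => (z : ZMod p)) hZ
    push_cast at h4 ⊢
    exact h4
  unfold phi
  have hd : ((q.den : ℕ) : ZMod p) ≠ 0 := hD
  field_simp
  linear_combination hZp

lemma phi_add {q r : ℚ} (hq : D p q) (hr : D p r) :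
    D p (q + r) ∧ phi p (q + r) = phi p q + phi p r := by
  have hkey : (q + r) * ((q.den * r.den : ℤ) : ℚ) =
      ((q.num * r.den + r.num * q.den : ℤ) : ℚ) := by
    push_cast
    linear_combination (r.den : ℚ) * mul_den q + (q.den : ℚ) * mul_den r
  have hb : (((q.den * r.den : ℤ)) : ZMod p) ≠ 0 := by
    push_cast
    exact mul_ne_zero hq hr
  obtain ⟨hD, hphi⟩ := phi_eq hkey hb
  refine ⟨hD, ?_⟩
  rw [hphi]
  unfold phi
  have hq' : ((q.den : ℕ) : ZMod p) ≠ 0 := hq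
  have hr' : ((r.den : ℕ) : ZMod p) ≠ 0 := hr
  push_cast
  field_simp
  try ring

lemma phi_mul {q r : ℚ} (hq : D p q) (hr : D p r) :
    D p (q * r) ∧ phi p (q * r) = phi p q * phi p r := by
  have hkey : (q * r) * ((q.den * r.den : ℤ) : ℚ) = ((q.num * r.num : ℤ) : ℚ) := by
    push_cast
    linear_combination (r * (r.den : ℚ)) * mul_den q + (q.num : ℚ) * mul_den r
  have hb : (((q.den * r.den : ℤ)) : ZMod p) ≠ 0 := by
    push_cast
    exact mul_ne_zero hq hr
  obtain ⟨hD, hphi⟩ := phi_eq hkey hb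
  refine ⟨hD, ?_⟩
  rw [hphi]
  unfold phi
  have hq' : ((q.den : ℕ) : ZMod p) ≠ 0 := hq
  have hr' : ((r.den : ℕ) : ZMod p) ≠ 0 := hr
  push_cast
  field_simp
  try ring

lemma phi_intCast (m : ℤ) : D p ((m : ℚ)) ∧ phi p (m : ℚ) = ((m : ℤ) : ZMod p) := by
  have hkey : (m : ℚ) * ((1 : ℤ) : ℚ) = ((m : ℤ) : ℚ) := by push_cast; ring
  have hb : (((1 : ℤ)) : ZMod p) ≠ 0 := by
    rw [Int.cast_one]
    exact one_ne_zero
  obtain ⟨hD, hphi⟩ := phi_eq hkey hb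
  exact ⟨hD, by rw [hphi, Int.cast_one, div_one]⟩

lemma phi_natCast (m : ℕ) : D p ((m : ℚ)) ∧ phi p (m : ℚ) = ((m : ℕ) : ZMod p) := by
  have h := phi_intCast (p := p) (m : ℤ)
  rw [Int.cast_natCast, Int.cast_natCast] at h
  exact h

lemma phi_one : D p (1 : ℚ) ∧ phi p (1 : ℚ) = 1 := by
  have h := phi_natCast (p := p) 1
  rw [Nat.cast_one, Nat.cast_one] at h
  exact h

lemma phi_zero : D p (0 : ℚ) ∧ phi p (0 : ℚ) = 0 := by
  have h := phi_natCast (p := p) 0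
  rw [Nat.cast_zero, Nat.cast_zero] at h
  exact h

lemma phi_neg {q : ℚ} (hq : D p q) : D p (-q) ∧ phi p (-q) = - phi p q := by
  have hkey : (-q) * ((q.den : ℤ) : ℚ) = ((-q.num : ℤ) : ℚ) := by
    push_cast
    linear_combination -(mul_den q)
  have hb : (((q.den : ℤ)) : ZMod p) ≠ 0 := by push_cast; exact hq
  obtain ⟨hD, hphi⟩ := phi_eq hkey hb
  refine ⟨hD, ?_⟩
  rw [hphi]
  unfold phi
  push_cast
  field_simp

lemma phi_sub {q r : ℚ} (hq : D p q) (hr : D p r) :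
    D p (q - r) ∧ phi p (q - r) = phi p q - phi p r := by
  have hnr := phi_neg hr
  have h := phi_add hq hnr.1
  rw [hnr.2] at h
  rw [sub_eq_add_neg]
  exact ⟨h.1, by rw [h.2]; ring⟩

lemma phi_num_ne_zero {q : ℚ} (hphi : phi p q ≠ 0) :
    (q.num : ZMod p) ≠ 0 ∧ q ≠ 0 := by
  constructor
  · intro h0
    apply hphi
    unfold phi
    rw [h0, zero_div]
  · rintro rfl
    exact hphi (phi_zero (p := p)).2

lemma phi_inv {q : ℚ} (hphi : phi p q ≠ 0) :
    D p (1 / q) ∧ phi p (1 / q) = (phi p q)⁻¹ := by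
  obtain ⟨hnum, hq0⟩ := phi_num_ne_zero hphi
  have hkey : (1 / q) * ((q.num : ℤ) : ℚ) = ((q.den : ℤ) : ℚ) := by
    rw [← mul_den q]
    field_simp
    norm_cast
  have hb : (((q.num : ℤ)) : ZMod p) ≠ 0 := hnum
  obtain ⟨hD, hphi'⟩ := phi_eq hkey hb
  refine ⟨hD, ?_⟩
  rw [hphi']
  unfold phi
  have : ((q.den : ℤ) : ZMod p) = ((q.den : ℕ) : ZMod p) := by push_cast; ring
  rw [this, inv_div]

lemma phi_pow {q : ℚ} (hq : D p q) (k : ℕ) :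
    D p (q ^ k) ∧ phi p (q ^ k) = (phi p q) ^ k := by
  induction k with
  | zero =>
    rw [pow_zero, pow_zero]
    exact phi_one
  | succ k ih =>
    have h := phi_mul ih.1 hq
    rw [← pow_succ] at h
    exact ⟨h.1, by rw [h.2, ih.2, pow_succ]⟩

lemma phi_sum {ι : Type*} {s : Finset ι} {f : ι → ℚ} (h : ∀ i ∈ s, D p (f i)) :
    D p (∑ i ∈ s, f i) ∧ phi p (∑ i ∈ s, f i) = ∑ i ∈ s, phi p (f i) := by
  classical
  induction s using Finset.cons_induction with
  | empty =>
    rw [Finset.sum_empty, Finset.sum_empty]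
    exact phi_zero
  | cons a s' hx ih =>
    rw [Finset.sum_cons, Finset.sum_cons]
    have ih' := ih (fun i hi => h i (Finset.mem_cons_of_mem hi))
    have ha := h a (Finset.mem_cons_self a s')
    have hres := phi_add ha ih'.1
    exact ⟨hres.1, by rw [hres.2, ih'.2]⟩

lemma phi_prod {ι : Type*} {s : Finset ι} {f : ι → ℚ} (h : ∀ i ∈ s, D p (f i)) :
    D p (∏ i ∈ s, f i) ∧ phi p (∏ i ∈ s, f i) = ∏ i ∈ s, phi p (f i) := by
  classical
  induction s using Finset.cons_induction with
  | empty =>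
    rw [Finset.prod_empty, Finset.prod_empty]
    exact phi_one
  | cons a s' hx ih =>
    rw [Finset.prod_cons, Finset.prod_cons]
    have ih' := ih (fun i hi => h i (Finset.mem_cons_of_mem hi))
    have ha := h a (Finset.mem_cons_self a s')
    have hres := phi_mul ha ih'.1
    exact ⟨hres.1, by rw [hres.2, ih'.2]⟩

/-- Congruence mod `p` is detected by `phi`. -/
lemma pcong_iff {q r : ℚ} (hq : D p q) (hr : D p r) :
    pCong p q r ↔ phi p q = phi p r := by
  constructor
  · rintro ⟨c, hc, he⟩
    have hDc : D p c := (D_iff_pInt c).mpr hc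
    have hDp := phi_natCast (p := p) p
    have hmul := phi_mul hDp.1 hDc
    have hsub := phi_sub hq hr
    have h0 : phi p (q - r) = 0 := by
      rw [he]
      have h1 : ((p : ℚ)) * c = ((p : ℕ) : ℚ) * c := by norm_num
      rw [h1, hmul.2, hDp.2, ZMod.natCast_self, zero_mul]
    rw [hsub.2] at h0
    exact sub_eq_zero.mp h0
  · intro h
    have hsub := phi_sub hq hr
    have h0 : phi p (q - r) = 0 := by rw [hsub.2, h, sub_self]
    set d := q - r with hd
    have hden : ((d.den : ℕ) : ZMod p) ≠ 0 := hsub.1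
    have hnum0 : ((d.num : ℤ) : ZMod p) = 0 := by
      unfold phi at h0
      field_simp at h0
      simpa using h0
    have hdvd : ((p : ℕ) : ℤ) ∣ d.num := (ZMod.intCast_zmod_eq_zero_iff_dvd _ _).mp hnum0
    obtain ⟨m, hm⟩ := hdvd
    have hdQ : (d.den : ℚ) ≠ 0 := by exact_mod_cast d.den_ne_zero
    have hp0 : (p : ℚ) ≠ 0 := by
      exact_mod_cast hpf.out.ne_zero
    refine ⟨(m : ℚ) / (d.den : ℚ), ?_, ?_⟩
    · rw [← D_iff_pInt]
      have hkey : ((m : ℚ) / (d.den : ℚ)) * ((d.den : ℤ) : ℚ) = ((m : ℤ) : ℚ) := by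
        push_cast
        field_simp
      have hb : (((d.den : ℤ)) : ZMod p) ≠ 0 := by push_cast; exact hden
      exact (phi_eq hkey hb).1
    · rw [hd]
      have : (d.num : ℚ) = (p : ℚ) * m := by exact_mod_cast congrArg (fun z : ℤ => (z : ℚ)) hm
      calc q - r = (d.num : ℚ) / (d.den : ℚ) := by rw [← hd, Rat.num_div_den]
        _ = (p : ℚ) * ((m : ℚ) / (d.den : ℚ)) := by rw [this]; ring

/-! ### Binomial coefficient computations -/

lemma fact_cast_ne_zero {k : ℕ} (hk : k < p) : ((k.factorial : ℕ) : ZMod p) ≠ 0 := by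
  rw [Ne, ZMod.natCast_eq_zero_iff]
  intro hdvd
  have := (Nat.Prime.dvd_factorial hpf.out).mp hdvd
  omega

lemma prod_cast_sub (a k : ℕ) (ha : a < p) (hk : k < p) :
    ∏ i ∈ range k, ((a : ZMod p) - (i : ZMod p))
      = (a.choose k : ZMod p) * (k.factorial : ZMod p) := by
  rcases le_or_gt k a with h | h
  · have h1 : ∀ i ∈ range k, ((a : ZMod p) - (i : ZMod p)) = (((a - i : ℕ)) : ZMod p) := by
      intro i hi
      rw [Finset.mem_range] at hi
      rw [Nat.cast_sub (by omega)]
    rw [Finset.prod_congr rfl h1, ← Nat.cast_prod, ← Nat.descFactorial_eq_prod_range,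
      Nat.descFactorial_eq_factorial_mul_choose, Nat.cast_mul, mul_comm]
  · have ha' : a ∈ range k := Finset.mem_range.mpr h
    rw [Finset.prod_eq_zero ha' (by rw [sub_self]), Nat.choose_eq_zero_of_lt h,
      Nat.cast_zero, zero_mul]

lemma nat_prod_asc (m : ℕ) : ∀ k : ℕ,
    ∏ i ∈ range k, (m + 1 + i) = k.factorial * (m + k).choose k
  | 0 => by simp
  | (k + 1) => by
    rw [Finset.prod_range_succ, nat_prod_asc m k]
    have h1 : m + 1 + k = Nat.succ (m + k) := by omega
    have h2 := Nat.add_one_mul_choose_eq (m + k) k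
    calc k.factorial * (m + k).choose k * (m + 1 + k)
        = k.factorial * (Nat.succ (m + k) * (m + k).choose k) := by rw [h1]; ring
      _ = k.factorial * ((m + k + 1).choose (k + 1) * (k + 1)) := by rw [h2]
      _ = (k + 1).factorial * (m + (k + 1)).choose (k + 1) := by
          rw [Nat.factorial_succ]
          have : m + k + 1 = m + (k + 1) := by omega
          rw [this]; ring

lemma choose_shift {m k : ℕ} (hm : m < p) (hk : k < p) :
    (((p - 1 - m).choose k : ℕ) : ZMod p) = (-1) ^ k * (((m + k).choose k : ℕ) : ZMod p) := by
  have hp1 : 1 ≤ p := hpf.out.one_lt.le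
  apply mul_right_cancel₀ (fact_cast_ne_zero hk)
  have hlt : p - 1 - m < p := by omega
  have h1 := prod_cast_sub (p - 1 - m) k hlt hk
  have hcast : (((p - 1 - m) : ℕ) : ZMod p) = -1 - (m : ZMod p) := by
    have h2 : ((p - 1 - m : ℕ) : ZMod p) = ((p : ℕ) : ZMod p) - 1 - (m : ZMod p) := by
      rw [Nat.cast_sub (by omega), Nat.cast_sub (by omega), Nat.cast_one]
    rw [h2, ZMod.natCast_self]
    ring
  rw [← h1]
  have h3 : ∀ i ∈ range k, ((p - 1 - m : ℕ) : ZMod p) - (i : ZMod p)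
      = (-1) * (((m + 1 + i : ℕ)) : ZMod p) := by
    intro i _
    rw [hcast]
    push_cast
    ring
  rw [Finset.prod_congr rfl h3, Finset.prod_mul_distrib, Finset.prod_const,
    Finset.card_range, ← Nat.cast_prod, nat_prod_asc, Nat.cast_mul]
  ring

lemma phi_gchoose {a : ℚ} {n : ℕ} (hD : D p a) (ha : phi p a = (n : ZMod p))
    (hn : n < p) {k : ℕ} (hk : k < p) :
    D p (gchoose a k) ∧ phi p (gchoose a k) = (n.choose k : ZMod p) := by
  have hfD : ∀ i ∈ range k, D p (a - (i : ℚ)) := by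
    intro i _
    exact (phi_sub hD (phi_natCast i).1).1
  have hP := phi_prod hfD
  have hPval : phi p (∏ i ∈ range k, (a - (i : ℚ)))
      = (n.choose k : ZMod p) * (k.factorial : ZMod p) := by
    rw [hP.2]
    rw [Finset.prod_congr rfl (fun i _ => (phi_sub hD (phi_natCast i).1).2)]
    rw [Finset.prod_congr rfl (fun i (_ : i ∈ range k) => by
      rw [ha, (phi_natCast (p := p) i).2])]
    exact prod_cast_sub n k hn hk
  have hfq : phi p ((k.factorial : ℕ) : ℚ) = ((k.factorial : ℕ) : ZMod p) :=
    (phi_natCast _).2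
  have hfne : phi p ((k.factorial : ℕ) : ℚ) ≠ 0 := by
    rw [hfq]; exact fact_cast_ne_zero hk
  have hinv := phi_inv hfne
  have heq : gchoose a k = (∏ i ∈ range k, (a - (i : ℚ))) * (1 / ((k.factorial : ℕ) : ℚ)) := by
    rw [gchoose, div_eq_mul_one_div]
  have hmul := phi_mul hP.1 hinv.1
  rw [← heq] at hmul
  refine ⟨hmul.1, ?_⟩
  rw [hmul.2, hPval, hinv.2, hfq, mul_assoc,
    mul_inv_cancel₀ (fact_cast_ne_zero hk), mul_one]

/-! ### The combinatorial identity -/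

lemma triangle_swap {R : Type*} [AddCommMonoid R] (N : ℕ) (f : ℕ → ℕ → R) :
    ∑ k ∈ range N, ∑ j ∈ range (N - k), f k j
      = ∑ r ∈ range N, ∑ k ∈ range (r + 1), f k (r - k) := by
  rw [Finset.sum_sigma', Finset.sum_sigma']
  refine Finset.sum_nbij' (fun x => ⟨x.1 + x.2, x.1⟩) (fun x => ⟨x.2, x.1 - x.2⟩)
    ?_ ?_ ?_ ?_ ?_
  · rintro ⟨k, j⟩ hx
    simp only [Finset.mem_sigma, Finset.mem_range] at hx ⊢
    omega
  · rintro ⟨r, k⟩ hx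
    simp only [Finset.mem_sigma, Finset.mem_range] at hx ⊢
    omega
  · rintro ⟨k, j⟩ hx
    simp only [Finset.mem_sigma, Finset.mem_range] at hx
    simp only [Sigma.mk.inj_iff, heq_eq_eq]
    exact ⟨trivial, by omega⟩
  · rintro ⟨r, k⟩ hx
    simp only [Finset.mem_sigma, Finset.mem_range] at hx
    simp only [Sigma.mk.inj_iff, heq_eq_eq]
    exact ⟨by omega, trivial⟩
  · rintro ⟨k, j⟩ hx
    simp only [Finset.mem_sigma, Finset.mem_range] at hx
    have : k + j - k = j := by omega
    simp [this]

lemma nat_inner (n m r : ℕ) (hr : r ≤ n) :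
    ∑ k ∈ range (r + 1), n.choose k * m.choose k * ((n - k).choose (r - k))
      = n.choose r * (m + r).choose r := by
  have h1 : ∀ k ∈ range (r + 1),
      n.choose k * m.choose k * ((n - k).choose (r - k))
        = n.choose r * (r.choose k * m.choose k) := by
    intro k hk
    rw [Finset.mem_range] at hk
    have hkr : k ≤ r := by omega
    have := Nat.choose_mul (n := n) hkr
    calc n.choose k * m.choose k * ((n - k).choose (r - k))
        = n.choose k * (n - k).choose (r - k) * m.choose k := by ring
      _ = n.choose r * r.choose k * m.choose k := by
          rw [← Nat.choose_mul hkr]; try ring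
      _ = n.choose r * (r.choose k * m.choose k) := by ring
  rw [Finset.sum_congr rfl h1, ← Finset.mul_sum]
  congr 1
  rw [Nat.add_choose_eq, Finset.Nat.sum_antidiagonal_eq_sum_range_succ_mk]
  apply Finset.sum_congr rfl
  intro k hk
  rw [Finset.mem_range] at hk
  rw [Nat.choose_symm (by omega)]
  ring

lemma key_ring {R : Type*} [CommRing R] (x y : R) (h : x + y = 1) (n m : ℕ) :
    ∑ k ∈ range (n + 1), (n.choose k : R) * (m.choose k : R) * x ^ k
      = ∑ k ∈ range (n + 1), (n.choose k : R) * ((m + k).choose k : R) * x ^ k * y ^ (n - k) := by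
  have expand : ∀ k ∈ range (n + 1),
      (n.choose k : R) * (m.choose k : R) * x ^ k
        = ∑ j ∈ range (n + 1 - k),
            (n.choose k : R) * (m.choose k : R) * ((n - k).choose j : R)
              * x ^ (k + j) * y ^ (n - k - j) := by
    intro k hk
    rw [Finset.mem_range] at hk
    have h1 : (1 : R) = (x + y) ^ (n - k) := by rw [h, one_pow]
    have h2 : (x + y) ^ (n - k)
        = ∑ j ∈ range (n - k + 1), x ^ j * y ^ (n - k - j) * ((n - k).choose j : R) :=
      add_pow x y (n - k)
    have h3 : n + 1 - k = n - k + 1 := by omega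
    calc (n.choose k : R) * (m.choose k : R) * x ^ k
        = (n.choose k : R) * (m.choose k : R) * x ^ k * (x + y) ^ (n - k) := by
          rw [← h1]; ring
      _ = ∑ j ∈ range (n + 1 - k),
            (n.choose k : R) * (m.choose k : R) * ((n - k).choose j : R)
              * x ^ (k + j) * y ^ (n - k - j) := by
          rw [h2, h3, Finset.mul_sum]
          apply Finset.sum_congr rfl
          intro j _
          rw [pow_add]
          ring
  rw [Finset.sum_congr rfl expand]
  rw [triangle_swap (n + 1) (fun k j =>
    (n.choose k : R) * (m.choose k : R) * ((n - k).choose j : R)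
      * x ^ (k + j) * y ^ (n - k - j))]
  apply Finset.sum_congr rfl
  intro r hr
  rw [Finset.mem_range] at hr
  have hrn : r ≤ n := by omega
  have h4 : ∀ k ∈ range (r + 1),
      (n.choose k : R) * (m.choose k : R) * ((n - k).choose (r - k) : R)
        * x ^ (k + (r - k)) * y ^ (n - k - (r - k))
      = ((n.choose k * m.choose k * (n - k).choose (r - k) : ℕ) : R) * (x ^ r * y ^ (n - r)) := by
    intro k hk
    rw [Finset.mem_range] at hk
    have e1 : k + (r - k) = r := by omega
    have e2 : n - k - (r - k) = n - r := by omega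
    rw [e1, e2]
    push_cast
    ring
  rw [Finset.sum_congr rfl h4, ← Finset.sum_mul, ← Nat.cast_sum, nat_inner n m r hrn]
  push_cast
  ring

/-! ### The core identity in `ZMod p` -/

lemma core (T : ZMod p) (hT : T ≠ 0) {n m : ℕ} (hn : n < p) (hm : m < p) :
    ∑ k ∈ range p, (n.choose k : ZMod p) * (m.choose k : ZMod p) * (1 - T) ^ k
      = T ^ n * ∑ k ∈ range p,
          (n.choose k : ZMod p) * ((p - 1 - m).choose k : ZMod p) * (1 - T⁻¹) ^ k := by
  have hsub : range (n + 1) ⊆ range p := by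
    intro x hx
    rw [Finset.mem_range] at hx ⊢
    omega
  have trunc : ∀ g : ℕ → ZMod p,
      ∑ k ∈ range p, (n.choose k : ZMod p) * g k = ∑ k ∈ range (n + 1), (n.choose k : ZMod p) * g k := by
    intro g
    refine (Finset.sum_subset hsub ?_).symm
    intro x _ hx
    rw [Finset.mem_range] at hx
    rw [Nat.choose_eq_zero_of_lt (by omega), Nat.cast_zero, zero_mul]
  have l1 : ∑ k ∈ range p, (n.choose k : ZMod p) * (m.choose k : ZMod p) * (1 - T) ^ k
      = ∑ k ∈ range (n + 1), (n.choose k : ZMod p) * ((m.choose k : ZMod p) * (1 - T) ^ k) := by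
    rw [← trunc (fun k => (m.choose k : ZMod p) * (1 - T) ^ k)]
    apply Finset.sum_congr rfl
    intro k _; ring
  have l2 : ∑ k ∈ range p,
        (n.choose k : ZMod p) * ((p - 1 - m).choose k : ZMod p) * (1 - T⁻¹) ^ k
      = ∑ k ∈ range (n + 1),
        (n.choose k : ZMod p) * (((p - 1 - m).choose k : ZMod p) * (1 - T⁻¹) ^ k) := by
    rw [← trunc (fun k => ((p - 1 - m).choose k : ZMod p) * (1 - T⁻¹) ^ k)]
    apply Finset.sum_congr rfl
    intro k _; ring
  rw [l1, l2, Finset.mul_sum]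
  have l3 : ∀ k ∈ range (n + 1),
      T ^ n * ((n.choose k : ZMod p) * (((p - 1 - m).choose k : ZMod p) * (1 - T⁻¹) ^ k))
        = (n.choose k : ZMod p) * (((m + k).choose k : ZMod p)) * (1 - T) ^ k * T ^ (n - k) := by
    intro k hk
    rw [Finset.mem_range] at hk
    have hkn : k ≤ n := by omega
    have hkp : k < p := by omega
    rw [choose_shift hm hkp]
    have e1 : T ^ n = T ^ k * T ^ (n - k) := by
      rw [← pow_add]
      congr 1
      omega
    have e2 : T ^ k * (1 - T⁻¹) ^ k = (T - 1) ^ k := by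
      rw [← mul_pow]
      congr 1
      field_simp
    have e3 : (-1 : ZMod p) ^ k * (T - 1) ^ k = (1 - T) ^ k := by
      rw [← mul_pow]
      congr 1
      ring
    calc T ^ n * ((n.choose k : ZMod p) * ((-1) ^ k * ((m + k).choose k : ZMod p) * (1 - T⁻¹) ^ k))
        = (n.choose k : ZMod p) * ((m + k).choose k : ZMod p)
            * ((-1) ^ k * (T ^ k * (1 - T⁻¹) ^ k)) * T ^ (n - k) := by
          rw [e1]; ring
      _ = (n.choose k : ZMod p) * (((m + k).choose k : ZMod p)) * (1 - T) ^ k * T ^ (n - k) := by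
          rw [e2, e3]; try ring
  rw [Finset.sum_congr rfl l3]
  have hkey := key_ring (1 - T) T (by ring) n m
  rw [← hkey]
  apply Finset.sum_congr rfl
  intro k _
  ring

lemma phi_eighth (a : ℤ) (h8 : (((8 : ℤ)) : ZMod p) ≠ 0) :
    D p ((a : ℚ) / 8) ∧ phi p ((a : ℚ) / 8) = ((a : ℤ) : ZMod p) / (((8 : ℤ)) : ZMod p) := by
  apply phi_eq (a := a) (b := 8)
  · push_cast
    ring
  · exact h8

end SumEighth

theorem sum_eighth_congr (p : ℕ) (hp : p.Prime) (hodd : Odd p)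
    (t : ℚ) (ht : pInt p t) (ht0 : ¬ pCong p t 0)
    (n : ℕ) (hn : n < p) (han : pCong p (-1/8) n) :
    pCong p
      (∑ k ∈ Finset.range p, gchoose (-1/8) k * gchoose (-3/8) k * (1 - t) ^ k)
      (t ^ n *
        ∑ k ∈ Finset.range p, gchoose (-1/8) k * gchoose (-5/8) k * (1 - 1/t) ^ k) := by
  haveI hpf : Fact p.Prime := ⟨hp⟩
  haveI : NeZero p := ⟨hp.ne_zero⟩
  open SumEighth in
  have hp2 : p ≠ 2 := by
    rintro rfl
    rw [Nat.odd_iff] at hodd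
    norm_num at hodd
  have h8 : (((8 : ℤ)) : ZMod p) ≠ 0 := by
    rw [Ne, ZMod.intCast_zmod_eq_zero_iff_dvd]
    intro hdvd
    have h1 : p ∣ 8 := by exact_mod_cast hdvd
    have h2 : p ∣ 2 ^ 3 := by norm_num; exact h1
    have h3 := Nat.Prime.dvd_of_dvd_pow hp h2
    exact hp2 ((Nat.prime_dvd_prime_iff_eq hp Nat.prime_two).mp h3)
  -- the three eighth fractions
  have e1 : (-1/8 : ℚ) = ((-1 : ℤ) : ℚ) / 8 := by norm_num
  have e3 : (-3/8 : ℚ) = ((-3 : ℤ) : ℚ) / 8 := by norm_num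
  have e5 : (-5/8 : ℚ) = ((-5 : ℤ) : ℚ) / 8 := by norm_num
  have h18 := e1 ▸ phi_eighth (p := p) (-1) h8
  have h38 := e3 ▸ phi_eighth (p := p) (-3) h8
  have h58 := e5 ▸ phi_eighth (p := p) (-5) h8
  have hD18 : D p (-1/8 : ℚ) := h18.1
  have hD38 : D p (-3/8 : ℚ) := h38.1
  have hD58 : D p (-5/8 : ℚ) := h58.1
  -- t and its image
  have hDt : D p t := (D_iff_pInt t).mpr ht
  set T := phi p t with hTdef
  have hT : T ≠ 0 := by
    intro h0
    apply ht0
    rw [pcong_iff hDt (phi_zero (p := p)).1, (phi_zero (p := p)).2]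
    exact h0
  -- phi (-1/8) = n
  have hphin : phi p (-1/8 : ℚ) = (n : ZMod p) := by
    rw [pcong_iff hD18 (phi_natCast (p := p) n).1] at han
    rw [han, (phi_natCast (p := p) n).2]
  -- m
  set m : ℕ := (phi p (-3/8 : ℚ)).val with hmdef
  have hm : m < p := ZMod.val_lt _
  have hphim : phi p (-3/8 : ℚ) = (m : ZMod p) :=
    (ZMod.natCast_rightInverse (phi p (-3/8 : ℚ))).symm
  -- m' := p - 1 - m
  have hm' : p - 1 - m < p := by have := hp.one_lt; omega
  have hphim' : phi p (-5/8 : ℚ) = ((p - 1 - m : ℕ) : ZMod p) := by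
    have hrel : (-5/8 : ℚ) = ((-1 : ℤ) : ℚ) - (-3/8 : ℚ) := by norm_num
    have hI := phi_intCast (p := p) (-1)
    have hs := phi_sub hI.1 hD38
    rw [← hrel] at hs
    rw [hs.2, hI.2, hphim]
    have hc : ((p - 1 - m : ℕ) : ZMod p) = ((p : ℕ) : ZMod p) - 1 - (m : ZMod p) := by
      rw [Nat.cast_sub (by omega), Nat.cast_sub (by omega), Nat.cast_one]
    rw [hc, ZMod.natCast_self]
    push_cast
    ring
  -- (1 - t) and (1 - 1/t)
  have hD1t := phi_sub (phi_one (p := p)).1 hDt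
  have hinv := phi_inv (p := p) hT
  have hD1t' := phi_sub (phi_one (p := p)).1 hinv.1
  -- left-hand side
  have hL : ∀ k ∈ Finset.range p, D p (gchoose (-1/8) k * gchoose (-3/8) k * (1 - t) ^ k) ∧
      phi p (gchoose (-1/8) k * gchoose (-3/8) k * (1 - t) ^ k)
        = (n.choose k : ZMod p) * (m.choose k : ZMod p) * (1 - T) ^ k := by
    intro k hk
    rw [Finset.mem_range] at hk
    have g1 := phi_gchoose hD18 hphin hn hk
    have g2 := phi_gchoose hD38 hphim hm hk
    have hpow := phi_pow hD1t.1 k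
    have h12 := phi_mul g1.1 g2.1
    have hall := phi_mul h12.1 hpow.1
    refine ⟨hall.1, ?_⟩
    rw [hall.2, h12.2, g1.2, g2.2, hpow.2, hD1t.2, (phi_one (p := p)).2]
  have hsumL := phi_sum (p := p) (fun k hk => (hL k hk).1)
  have hphiL : phi p (∑ k ∈ Finset.range p, gchoose (-1/8) k * gchoose (-3/8) k * (1 - t) ^ k)
      = ∑ k ∈ Finset.range p, (n.choose k : ZMod p) * (m.choose k : ZMod p) * (1 - T) ^ k := by
    rw [hsumL.2]
    exact Finset.sum_congr rfl (fun k hk => (hL k hk).2)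
  -- right-hand side
  have hR : ∀ k ∈ Finset.range p, D p (gchoose (-1/8) k * gchoose (-5/8) k * (1 - 1/t) ^ k) ∧
      phi p (gchoose (-1/8) k * gchoose (-5/8) k * (1 - 1/t) ^ k)
        = (n.choose k : ZMod p) * (((p - 1 - m).choose k) : ZMod p) * (1 - T⁻¹) ^ k := by
    intro k hk
    rw [Finset.mem_range] at hk
    have g1 := phi_gchoose hD18 hphin hn hk
    have g3 := phi_gchoose hD58 hphim' hm' hk
    have hpow := phi_pow hD1t'.1 k
    have h13 := phi_mul g1.1 g3.1
    have hall := phi_mul h13.1 hpow.1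
    refine ⟨hall.1, ?_⟩
    rw [hall.2, h13.2, g1.2, g3.2, hpow.2, hD1t'.2, (phi_one (p := p)).2, hinv.2]
  have hsumR := phi_sum (p := p) (fun k hk => (hR k hk).1)
  have hpowt := phi_pow hDt n
  have hRall := phi_mul hpowt.1 hsumR.1
  have hphiR : phi p (t ^ n *
        ∑ k ∈ Finset.range p, gchoose (-1/8) k * gchoose (-5/8) k * (1 - 1/t) ^ k)
      = T ^ n * ∑ k ∈ Finset.range p,
          (n.choose k : ZMod p) * (((p - 1 - m).choose k) : ZMod p) * (1 - T⁻¹) ^ k := by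
    rw [hRall.2, hpowt.2, hsumR.2]
    congr 1
    exact Finset.sum_congr rfl (fun k hk => (hR k hk).2)
  rw [pcong_iff hsumL.1 hRall.1, hphiL, hphiR]
  exact core T hT hn hm
end

section
/- Let p > 3 be a prime and t a p-integral rational with t \not\equiv 0 (mod p). Let n = \langle -1/12 \rangle_p be the residue of -1/12 modulo p. Then \sum_{k=0}^{p-1} \binom{-1/12}{k} \binom{-5/12}{k} (1-t)^k \equiv t^n \sum_{k=0}^{p-1} \binom{-1/12}{k} \binom{-7/12}{k} (1 - 1/t)^k (mod p). -/
open Finset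


private lemma tri {M : Type*} [AddCommMonoid M] (n : ℕ) (f : ℕ → ℕ → M) :
    ∑ K ∈ range (n+1), ∑ j ∈ range (K+1), f K j
      = ∑ j ∈ range (n+1), ∑ i ∈ range (n+1-j), f (j+i) j := by
  rw [Finset.sum_sigma', Finset.sum_sigma']
  refine Finset.sum_nbij' (fun x => ⟨x.2, x.1 - x.2⟩) (fun x => ⟨x.1 + x.2, x.1⟩) ?_ ?_ ?_ ?_ ?_
  · rintro ⟨K, j⟩ hx
    simp only [Finset.mem_sigma, Finset.mem_range] at hx ⊢
    omega
  · rintro ⟨j, i⟩ hx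
    simp only [Finset.mem_sigma, Finset.mem_range] at hx ⊢
    omega
  · rintro ⟨K, j⟩ hx
    simp only [Finset.mem_sigma, Finset.mem_range] at hx
    have h1 : j + (K - j) = K := by omega
    simp only [h1]
  · rintro ⟨j, i⟩ hx
    simp only [Finset.mem_sigma, Finset.mem_range] at hx
    have h1 : (j + i) - j = i := by omega
    simp only [h1]
  · rintro ⟨K, j⟩ hx
    simp only [Finset.mem_sigma, Finset.mem_range] at hx
    have h1 : j + (K - j) = K := by omega
    simp only [h1]

private lemma negpow_sub (N d : ℕ) (h : d ≤ N) :
    ((-1 : ℤ))^(N-d) = (-1)^N * (-1)^d := by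
  conv_rhs => rw [← Nat.sub_add_cancel h]
  rw [pow_add, mul_assoc, ← mul_pow]
  norm_num

private lemma key2 (m K : ℕ) :
    ∑ j ∈ range (K+1), ((-1 : ℤ))^(K-j) * (K.choose j) * ((m+j).choose j)
      = (m.choose K : ℤ) := by
  have vand : ∀ j ∈ range (K+1),
      ((-1 : ℤ))^(K-j) * (K.choose j) * ((m+j).choose j)
        = ∑ i ∈ range (j+1), ((-1 : ℤ))^(K-j) * (K.choose j) * ((m.choose i : ℤ) * (j.choose i)) := by
    intro j _
    rw [← Finset.mul_sum]
    congr 1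
    have h := Nat.add_choose_eq m j j
    rw [Finset.Nat.sum_antidiagonal_eq_sum_range_succ_mk] at h
    have h2 : ∑ i ∈ range (j+1), m.choose i * j.choose (j - i)
        = ∑ i ∈ range (j+1), m.choose i * j.choose i := by
      refine Finset.sum_congr rfl fun i hi => ?_
      rw [Nat.choose_symm (by simpa using Nat.lt_succ_iff.mp (Finset.mem_range.mp hi))]
    rw [h2] at h
    exact_mod_cast congrArg (Nat.cast : ℕ → ℤ) h
  rw [Finset.sum_congr rfl vand, tri]
  have inner : ∀ i ∈ range (K+1),
      ∑ d ∈ range (K+1-i), ((-1 : ℤ))^(K-(i+d)) * (K.choose (i+d)) * ((m.choose i : ℤ) * ((i+d).choose i))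
        = (m.choose i : ℤ) * (K.choose i) * ((-1)^(K-i) * if K - i = 0 then 1 else 0) := by
    intro i hi
    have hiK : i ≤ K := Nat.lt_succ_iff.mp (Finset.mem_range.mp hi)
    have hr : K + 1 - i = (K - i) + 1 := by omega
    rw [hr]
    have step : ∀ d ∈ range ((K-i)+1),
        ((-1 : ℤ))^(K-(i+d)) * (K.choose (i+d)) * ((m.choose i : ℤ) * ((i+d).choose i))
          = (m.choose i : ℤ) * (K.choose i) * ((-1)^(K-i) * ((-1)^d * ((K-i).choose d))) := by
      intro d hd
      have hdK : d ≤ K - i := Nat.lt_succ_iff.mp (Finset.mem_range.mp hd)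
      have hch : (K.choose (i+d) : ℤ) * ((i+d).choose i) = (K.choose i : ℤ) * ((K-i).choose d) := by
        have := Nat.choose_mul (n := K) (show i ≤ i + d by omega)
        have h' : (i + d) - i = d := by omega
        rw [h'] at this
        exact_mod_cast congrArg (Nat.cast : ℕ → ℤ) this
      have hsgn : ((-1 : ℤ))^(K-(i+d)) = (-1)^(K-i) * (-1)^d := by
        have : K - (i+d) = (K-i) - d := by omega
        rw [this, negpow_sub _ _ hdK]
      calc ((-1 : ℤ))^(K-(i+d)) * (K.choose (i+d)) * ((m.choose i : ℤ) * ((i+d).choose i))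
          = ((-1 : ℤ))^(K-(i+d)) * ((m.choose i : ℤ)) * ((K.choose (i+d) : ℤ) * ((i+d).choose i)) := by ring
        _ = ((-1)^(K-i) * (-1)^d) * ((m.choose i : ℤ)) * ((K.choose i : ℤ) * ((K-i).choose d)) := by rw [hch, hsgn]
        _ = (m.choose i : ℤ) * (K.choose i) * ((-1)^(K-i) * ((-1)^d * ((K-i).choose d))) := by ring
    rw [Finset.sum_congr rfl step, ← Finset.mul_sum, ← Finset.mul_sum]
    congr 1
    congr 1
    have := Int.alternating_sum_range_choose (n := K - i)
    simpa using this
  rw [Finset.sum_congr rfl inner]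
  rw [Finset.sum_eq_single_of_mem K (Finset.self_mem_range_succ K)]
  · simp
  · intro i hi hne
    have : ¬ (K - i = 0) := by
      have := Nat.lt_succ_iff.mp (Finset.mem_range.mp hi)
      omega
    simp [this]

private lemma key3 (n m K : ℕ) (hK : K ≤ n) :
    ∑ j ∈ range (K+1), ((-1 : ℤ))^(K-j) * (n.choose j) * ((m+j).choose j) * ((n-j).choose (K-j))
      = (n.choose K : ℤ) * (m.choose K) := by
  have step : ∀ j ∈ range (K+1),
      ((-1 : ℤ))^(K-j) * (n.choose j) * ((m+j).choose j) * ((n-j).choose (K-j))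
        = (n.choose K : ℤ) * (((-1 : ℤ))^(K-j) * (K.choose j) * ((m+j).choose j)) := by
    intro j hj
    have hjK : j ≤ K := Nat.lt_succ_iff.mp (Finset.mem_range.mp hj)
    have h := Nat.choose_mul (n := n) hjK
    have h' : (n.choose j : ℤ) * ((n-j).choose (K-j)) = (n.choose K : ℤ) * (K.choose j) := by
      exact_mod_cast (congrArg (Nat.cast : ℕ → ℤ) h).symm
    calc ((-1 : ℤ))^(K-j) * (n.choose j) * ((m+j).choose j) * ((n-j).choose (K-j))
        = ((-1 : ℤ))^(K-j) * ((m+j).choose j) * ((n.choose j : ℤ) * ((n-j).choose (K-j))) := by ring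
      _ = ((-1 : ℤ))^(K-j) * ((m+j).choose j) * ((n.choose K : ℤ) * (K.choose j)) := by rw [h']
      _ = (n.choose K : ℤ) * (((-1 : ℤ))^(K-j) * (K.choose j) * ((m+j).choose j)) := by ring
  rw [Finset.sum_congr rfl step, ← Finset.mul_sum, key2]

private lemma poly_id {R : Type*} [CommRing R] (x : R) (n m : ℕ) :
    ∑ k ∈ range (n+1), ((n.choose k * (m+k).choose k : ℕ) : R) * (x^k * (1-x)^(n-k))
      = ∑ k ∈ range (n+1), ((n.choose k * m.choose k : ℕ) : R) * x^k := by
  set g : ℕ → ℕ → R := fun k i =>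
    ((n.choose k * (m+k).choose k : ℕ) : R) * ((n-k).choose i) * (-1)^i * x^(k+i) with hg
  have step1 : ∀ k ∈ range (n+1),
      ((n.choose k * (m+k).choose k : ℕ) : R) * (x^k * (1-x)^(n-k))
        = ∑ i ∈ range (n+1-k), g k i := by
    intro k hk
    have hkn : k ≤ n := Nat.lt_succ_iff.mp (Finset.mem_range.mp hk)
    have hpow : (1 - x)^(n-k) = ∑ i ∈ range ((n-k)+1), (-x)^i * 1^((n-k)-i) * ((n-k).choose i) := by
      rw [show (1 - x) = -x + 1 from by ring, ← add_pow]
    have hr : n + 1 - k = (n-k) + 1 := by omega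
    rw [hr, hpow, Finset.mul_sum, Finset.mul_sum]
    refine Finset.sum_congr rfl fun i hi => ?_
    have hgv : g k i = ((n.choose k * (m+k).choose k : ℕ) : R) * ((n-k).choose i) * (-1)^i * x^(k+i) := rfl
    rw [hgv, pow_add]
    push_cast
    ring
  rw [Finset.sum_congr rfl step1]
  have swap : ∑ k ∈ range (n+1), ∑ i ∈ range (n+1-k), g k i
      = ∑ K ∈ range (n+1), ∑ j ∈ range (K+1), g j (K-j) := by
    rw [tri n (fun K j => g j (K - j))]
    refine Finset.sum_congr rfl fun j hj => Finset.sum_congr rfl fun i hi => ?_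
    rw [Nat.add_sub_cancel_left]
  rw [swap]
  refine Finset.sum_congr rfl fun K hK => ?_
  have hKn : K ≤ n := Nat.lt_succ_iff.mp (Finset.mem_range.mp hK)
  have step2 : ∀ j ∈ range (K+1),
      g j (K-j) = (((-1 : ℤ))^(K-j) * (n.choose j) * ((m+j).choose j) * ((n-j).choose (K-j)) : ℤ) * x^K := by
    intro j hj
    have hjK : j ≤ K := Nat.lt_succ_iff.mp (Finset.mem_range.mp hj)
    have hx : j + (K - j) = K := by omega
    have hgv : g j (K-j) = ((n.choose j * (m+j).choose j : ℕ) : R) * ((n-j).choose (K-j)) * (-1)^(K-j) * x^(j+(K-j)) := rfl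
    rw [hgv, hx]
    push_cast
    ring
  rw [Finset.sum_congr rfl step2, ← Finset.sum_mul, ← Int.cast_sum, key3 n m K hKn]
  push_cast
  ring

section phi
variable {p : ℕ}

private lemma rat_mul_den (q : ℚ) : q * (q.den : ℚ) = (q.num : ℚ) := by
  have hden : (q.den : ℚ) ≠ 0 := by exact_mod_cast q.den_nz
  have h2 : (q.num : ℚ) / (q.den : ℚ) * (q.den : ℚ) = (q.num : ℚ) := div_mul_cancel₀ _ hden
  rw [Rat.num_div_den q] at h2
  exact h2

private lemma pInt_add (hp : p.Prime) {r s : ℚ} (hr : pInt p r) (hs : pInt p s) :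
    pInt p (r + s) := fun h =>
  ((hp.dvd_mul.mp (h.trans (Rat.add_den_dvd r s))).elim hr hs)

private lemma pInt_mul (hp : p.Prime) {r s : ℚ} (hr : pInt p r) (hs : pInt p s) :
    pInt p (r * s) := fun h =>
  ((hp.dvd_mul.mp (h.trans (Rat.mul_den_dvd r s))).elim hr hs)

private lemma pInt_neg {r : ℚ} (hr : pInt p r) : pInt p (-r) := by
  simpa [pInt, Rat.neg_den] using hr

private lemma pInt_intCast (hp : p.Prime) (a : ℤ) : pInt p (a : ℚ) := by
  rw [pInt, Rat.den_intCast]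
  exact fun h => hp.ne_one (Nat.dvd_one.mp h)

private lemma pInt_natCast (hp : p.Prime) (a : ℕ) : pInt p (a : ℚ) := by
  simpa using pInt_intCast hp (a : ℤ)

private lemma pInt_zero (hp : p.Prime) : pInt p 0 := by
  simpa using pInt_natCast hp 0

private lemma pInt_one (hp : p.Prime) : pInt p 1 := by
  simpa using pInt_natCast hp 1

private lemma pInt_sub (hp : p.Prime) {r s : ℚ} (hr : pInt p r) (hs : pInt p s) :
    pInt p (r - s) := by
  simpa [sub_eq_add_neg] using pInt_add hp hr (pInt_neg hs)

private lemma pInt_pow (hp : p.Prime) {r : ℚ} (hr : pInt p r) (k : ℕ) : pInt p (r ^ k) := by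
  induction k with
  | zero => simpa using pInt_one hp
  | succ k ih => rw [pow_succ]; exact pInt_mul hp ih hr

private lemma pInt_sum (hp : p.Prime) {ι : Type*} {s : Finset ι} {f : ι → ℚ}
    (h : ∀ i ∈ s, pInt p (f i)) : pInt p (∑ i ∈ s, f i) :=
  Finset.sum_induction f (pInt p) (fun _ _ ha hb => pInt_add hp ha hb) (pInt_zero hp) h

private lemma pInt_prod (hp : p.Prime) {ι : Type*} {s : Finset ι} {f : ι → ℚ}
    (h : ∀ i ∈ s, pInt p (f i)) : pInt p (∏ i ∈ s, f i) :=
  Finset.prod_induction f (pInt p) (fun _ _ ha hb => pInt_mul hp ha hb) (pInt_one hp) h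

private lemma pInt_div_nat (hp : p.Prime) {x : ℚ} (hx : pInt p x) {m : ℕ} (hm : ¬ p ∣ m) :
    pInt p (x / (m : ℚ)) := by
  have h1 : pInt p (1 / (m : ℚ)) := by
    intro h
    have hd : ((Rat.divInt 1 (m : ℤ)).den : ℤ) ∣ (m : ℤ) := Rat.den_dvd 1 (m : ℤ)
    rw [Rat.divInt_eq_div] at hd
    push_cast at hd
    have h2 : ((1 : ℚ) / (m : ℚ)).den ∣ m := by exact_mod_cast hd
    exact hm (h.trans h2)
  have h3 : x / (m : ℚ) = x * (1 / (m : ℚ)) := by ring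
  rw [h3]
  exact pInt_mul hp hx h1

/-- reduction of a rational mod p -/
def phi (p : ℕ) (r : ℚ) : ZMod p := (r.num : ZMod p) * ((r.den : ℕ) : ZMod p)⁻¹

variable [Fact p.Prime]

private lemma den_ne {r : ℚ} (hr : pInt p r) : ((r.den : ℕ) : ZMod p) ≠ 0 := by
  rw [Ne, ZMod.natCast_eq_zero_iff]
  exact hr

private lemma phi_spec {r : ℚ} (hr : pInt p r) :
    ((r.den : ℕ) : ZMod p) * phi p r = (r.num : ZMod p) := by
  rw [phi, mul_comm, mul_assoc, inv_mul_cancel₀ (den_ne hr), mul_one]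

private lemma phi_eval {r : ℚ} (hr : pInt p r) (a b : ℤ) (hb : ¬ (p : ℤ) ∣ b)
    (h : r * (b : ℚ) = (a : ℚ)) : phi p r = (a : ZMod p) * ((b : ZMod p))⁻¹ := by
  have hq : (r.num : ℚ) * (b : ℚ) = (a : ℚ) * (r.den : ℚ) := by
    linear_combination ((r.den : ℚ)) * h - (b : ℚ) * rat_mul_den r
  have hz : (r.num : ℤ) * b = a * (r.den : ℤ) := by exact_mod_cast hq
  have hzm : (r.num : ZMod p) * (b : ZMod p) = (a : ZMod p) * ((r.den : ℕ) : ZMod p) := by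
    have h5 := congrArg (Int.cast : ℤ → ZMod p) hz
    push_cast at h5
    exact h5
  have hbz : ((b : ℤ) : ZMod p) ≠ 0 := by
    rw [Ne, ZMod.intCast_zmod_eq_zero_iff_dvd]
    exact hb
  rw [phi]
  field_simp [den_ne hr, hbz]
  linear_combination hzm

private lemma phi_intCast (a : ℤ) : phi p (a : ℚ) = (a : ZMod p) := by
  rw [phi]
  simp [Rat.den_intCast]

private lemma phi_natCast (a : ℕ) : phi p (a : ℚ) = (a : ZMod p) := by
  have h : ((a : ℤ) : ℚ) = (a : ℚ) := by push_cast; ring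
  rw [← h, phi_intCast]
  push_cast
  ring

private lemma phi_zero : phi p (0 : ℚ) = 0 := by simpa using phi_natCast (p := p) 0
private lemma phi_one : phi p (1 : ℚ) = 1 := by simpa using phi_natCast (p := p) 1

private lemma phi_neg (r : ℚ) : phi p (-r) = - phi p r := by
  rw [phi, phi, Rat.neg_den, Rat.neg_num]
  push_cast
  ring

private lemma natdvd_iff (b : ℕ) : (¬ (p : ℤ) ∣ (b : ℤ)) ↔ ¬ p ∣ b := by
  constructor <;> intro h hd <;> exact h (by exact_mod_cast hd)

private lemma phi_add (hp : p.Prime) {r s : ℚ} (hr : pInt p r) (hs : pInt p s) :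
    phi p (r + s) = phi p r + phi p s := by
  have hdd : ¬ (p : ℤ) ∣ ((r.den * s.den : ℕ) : ℤ) := by
    rw [natdvd_iff]
    intro h
    exact (hp.dvd_mul.mp h).elim hr hs
  have key : (r + s) * (((r.den * s.den : ℕ) : ℤ) : ℚ)
      = ((r.num * s.den + s.num * r.den : ℤ) : ℚ) := by
    push_cast
    linear_combination ((s.den : ℚ)) * rat_mul_den r + ((r.den : ℚ)) * rat_mul_den s
  rw [phi_eval (pInt_add hp hr hs) _ _ hdd key, phi, phi]
  have hu : ((r.den : ℕ) : ZMod p) ≠ 0 := den_ne hr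
  have hv : ((s.den : ℕ) : ZMod p) ≠ 0 := den_ne hs
  have huv : (((r.den * s.den : ℕ) : ℕ) : ZMod p) ≠ 0 := by
    push_cast
    exact mul_ne_zero hu hv
  field_simp
  try push_cast
  try ring

private lemma phi_mul (hp : p.Prime) {r s : ℚ} (hr : pInt p r) (hs : pInt p s) :
    phi p (r * s) = phi p r * phi p s := by
  have hdd : ¬ (p : ℤ) ∣ ((r.den * s.den : ℕ) : ℤ) := by
    rw [natdvd_iff]
    intro h
    exact (hp.dvd_mul.mp h).elim hr hs
  have key : (r * s) * (((r.den * s.den : ℕ) : ℤ) : ℚ) = ((r.num * s.num : ℤ) : ℚ) := by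
    push_cast
    linear_combination (s * (s.den : ℚ)) * rat_mul_den r + ((r.num : ℚ)) * rat_mul_den s
  rw [phi_eval (pInt_mul hp hr hs) _ _ hdd key, phi, phi]
  have hu : ((r.den : ℕ) : ZMod p) ≠ 0 := den_ne hr
  have hv : ((s.den : ℕ) : ZMod p) ≠ 0 := den_ne hs
  field_simp
  try push_cast
  try ring

private lemma phi_sub (hp : p.Prime) {r s : ℚ} (hr : pInt p r) (hs : pInt p s) :
    phi p (r - s) = phi p r - phi p s := by
  rw [sub_eq_add_neg, phi_add hp hr (pInt_neg hs), phi_neg, sub_eq_add_neg]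

private lemma phi_pow (hp : p.Prime) {r : ℚ} (hr : pInt p r) (k : ℕ) :
    phi p (r ^ k) = (phi p r) ^ k := by
  induction k with
  | zero => simpa using phi_one
  | succ k ih => rw [pow_succ, pow_succ, phi_mul hp (pInt_pow hp hr k) hr, ih]

private lemma phi_sum (hp : p.Prime) {ι : Type*} (s : Finset ι) (f : ι → ℚ)
    (h : ∀ i ∈ s, pInt p (f i)) : phi p (∑ i ∈ s, f i) = ∑ i ∈ s, phi p (f i) := by
  induction s using Finset.cons_induction with
  | empty => simpa using phi_zero
  | cons a s ha ih =>
    rw [Finset.sum_cons, Finset.sum_cons,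
      phi_add hp (h a (Finset.mem_cons_self a s))
        (pInt_sum hp fun i hi => h i (Finset.mem_cons.mpr (Or.inr hi))),
      ih fun i hi => h i (Finset.mem_cons.mpr (Or.inr hi))]

private lemma phi_prod (hp : p.Prime) {ι : Type*} (s : Finset ι) (f : ι → ℚ)
    (h : ∀ i ∈ s, pInt p (f i)) : phi p (∏ i ∈ s, f i) = ∏ i ∈ s, phi p (f i) := by
  induction s using Finset.cons_induction with
  | empty => simpa using phi_one
  | cons a s ha ih =>
    rw [Finset.prod_cons, Finset.prod_cons,
      phi_mul hp (h a (Finset.mem_cons_self a s))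
        (pInt_prod hp fun i hi => h i (Finset.mem_cons.mpr (Or.inr hi))),
      ih fun i hi => h i (Finset.mem_cons.mpr (Or.inr hi))]

private lemma pcong_of_phi (hp : p.Prime) {r s : ℚ} (hr : pInt p r) (hs : pInt p s)
    (h : phi p r = phi p s) : pCong p r s := by
  have hdi : pInt p (r - s) := pInt_sub hp hr hs
  have hphid : phi p (r - s) = 0 := by
    rw [phi_sub hp hr hs, h, sub_self]
  have hnum : (((r - s).num : ℤ) : ZMod p) = 0 := by
    have h6 := phi_spec hdi
    rw [hphid, mul_zero] at h6
    exact h6.symm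
  have hdvd : (p : ℤ) ∣ (r - s).num := (ZMod.intCast_zmod_eq_zero_iff_dvd _ _).mp hnum
  obtain ⟨e, he⟩ := hdvd
  refine ⟨(e : ℚ) / ((r - s).den : ℚ), ?_, ?_⟩
  · intro hdc
    have hdd : ((Rat.divInt e ((r - s).den : ℤ)).den : ℤ) ∣ ((r - s).den : ℤ) :=
      Rat.den_dvd e ((r - s).den : ℤ)
    rw [Rat.divInt_eq_div] at hdd
    push_cast at hdd
    have h7 : ((e : ℚ) / (((r - s).den : ℕ) : ℚ)).den ∣ (r - s).den := by exact_mod_cast hdd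
    exact hdi (hdc.trans h7)
  · have hden : (((r - s).den : ℕ) : ℚ) ≠ 0 := by exact_mod_cast (r - s).den_nz
    have hne : ((r - s).num : ℚ) = (p : ℚ) * (e : ℚ) := by exact_mod_cast he
    have h9 : (p : ℚ) * ((e : ℚ) / (((r - s).den : ℕ) : ℚ)) = ((p : ℚ) * (e : ℚ)) / (((r - s).den : ℕ) : ℚ) := by
      ring
    rw [h9, ← hne, eq_comm, div_eq_iff hden, eq_comm]
    exact rat_mul_den (r - s)

private lemma phi_of_pcong (hp : p.Prime) {r s : ℚ} (hr : pInt p r) (hs : pInt p s)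
    (h : pCong p r s) : phi p r = phi p s := by
  obtain ⟨c, hc, hrs⟩ := h
  have h8 : phi p r - phi p s = 0 := by
    rw [← phi_sub hp hr hs, hrs, phi_mul hp (pInt_natCast hp p) hc, phi_natCast,
      ZMod.natCast_self, zero_mul]
  exact sub_eq_zero.mp h8

end phi

section main
variable {p : ℕ}

private lemma not_dvd_factorial (hp : p.Prime) {k : ℕ} (hk : k < p) : ¬ p ∣ k.factorial :=
  fun h => absurd (hp.dvd_factorial.mp h) (by omega)

variable [Fact p.Prime]

private lemma fact_ne (hp : p.Prime) {k : ℕ} (hk : k < p) : ((k.factorial : ℕ) : ZMod p) ≠ 0 := by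
  rw [Ne, ZMod.natCast_eq_zero_iff]
  exact not_dvd_factorial hp hk

private lemma pInt_gchoose (hp : p.Prime) {a : ℚ} (ha : pInt p a) {k : ℕ} (hk : k < p) :
    pInt p (gchoose a k) := by
  rw [gchoose]
  exact pInt_div_nat hp (pInt_prod hp fun i _ => pInt_sub hp ha (pInt_natCast hp i))
    (not_dvd_factorial hp hk)

private lemma phi_gchoose (hp : p.Prime) {a : ℚ} (ha : pInt p a) {k : ℕ} (hk : k < p) :
    phi p (gchoose a k)
      = (∏ i ∈ range k, (phi p a - (i : ZMod p))) / ((k.factorial : ℕ) : ZMod p) := by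
  have hfq : ((k.factorial : ℕ) : ℚ) ≠ 0 := by
    exact_mod_cast k.factorial_ne_zero
  have h1 : gchoose a k * ((k.factorial : ℕ) : ℚ) = ∏ i ∈ range k, (a - (i : ℚ)) := by
    rw [gchoose]
    exact div_mul_cancel₀ _ hfq
  have hprod : phi p (∏ i ∈ range k, (a - (i : ℚ))) = ∏ i ∈ range k, (phi p a - (i : ZMod p)) := by
    rw [phi_prod hp _ _ (fun i _ => pInt_sub hp ha (pInt_natCast hp i))]
    exact Finset.prod_congr rfl fun i _ => by
      rw [phi_sub hp ha (pInt_natCast hp i), phi_natCast]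
  have h3 : phi p (gchoose a k) * ((k.factorial : ℕ) : ZMod p)
      = ∏ i ∈ range k, (phi p a - (i : ZMod p)) := by
    rw [← hprod, ← h1, phi_mul hp (pInt_gchoose hp ha hk) (pInt_natCast hp _), phi_natCast]
  rw [eq_div_iff (fact_ne hp hk)]
  exact h3

private lemma prod_sub_nat {R : Type} [CommRing R] (N k : ℕ) :
    (∏ i ∈ range k, ((N : R) - (i : R))) = ((N.descFactorial k : ℕ) : R) := by
  rcases le_or_gt k N with h | h
  · have h1 : ∀ i ∈ range k, ((N : R) - (i : R)) = (((N - i : ℕ)) : R) := by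
      intro i hi
      have : i ≤ N := le_trans (Nat.le_of_lt (Finset.mem_range.mp hi)) h
      rw [Nat.cast_sub this]
    rw [Finset.prod_congr rfl h1, ← Nat.cast_prod, Nat.descFactorial_eq_prod_range]
  · rw [Nat.descFactorial_eq_zero_iff_lt.mpr h, Nat.cast_zero]
    refine Finset.prod_eq_zero (Finset.mem_range.mpr h) ?_
    simp

private lemma choose_form (hp : p.Prime) (N k : ℕ) (hk : k < p) :
    (∏ i ∈ range k, ((N : ZMod p) - (i : ZMod p))) / ((k.factorial : ℕ) : ZMod p)
      = ((N.choose k : ℕ) : ZMod p) := by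
  rw [prod_sub_nat, Nat.descFactorial_eq_factorial_mul_choose, Nat.cast_mul,
    mul_div_cancel_left₀ _ (fact_ne hp hk)]

private lemma asc_prod (m k : ℕ) : ∏ i ∈ range k, (m + 1 + i) = (m+1).ascFactorial k := by
  induction k with
  | zero => simp
  | succ k ih => rw [Finset.prod_range_succ, ih, Nat.ascFactorial_succ, mul_comm]

private lemma choose_form2 (hp : p.Prime) (m k : ℕ) (hk : k < p) :
    (∏ i ∈ range k, ((-1 - (m : ZMod p)) - (i : ZMod p))) / ((k.factorial : ℕ) : ZMod p)
      = (-1)^k * (((m+k).choose k : ℕ) : ZMod p) := by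
  have h1 : ∀ i ∈ range k, ((-1 - (m : ZMod p)) - (i : ZMod p))
      = (-1) * (((m + 1 + i : ℕ)) : ZMod p) := by
    intro i _
    push_cast
    ring
  rw [Finset.prod_congr rfl h1, Finset.prod_mul_distrib, Finset.prod_const, ← Nat.cast_prod,
    asc_prod, Nat.ascFactorial_eq_factorial_mul_choose, Finset.card_range, Nat.cast_mul,
    mul_div_assoc, mul_div_cancel_left₀ _ (fact_ne hp hk)]

private lemma core (hp : p.Prime) (n m : ℕ) (hn : n < p) (τ : ZMod p) (hτ : τ ≠ 0) :
    ∑ k ∈ range p, (n.choose k : ZMod p) * (m.choose k : ZMod p) * (1-τ)^k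
      = τ^n * ∑ k ∈ range p,
          (n.choose k : ZMod p) * ((-1)^k * (((m+k).choose k : ℕ) : ZMod p)) * (1-1/τ)^k := by
  have hsub : range (n+1) ⊆ range p := by
    rw [Finset.range_subset_range]
    omega
  have vanish : ∀ (f : ℕ → ZMod p), ∀ k ∈ range p, k ∉ range (n+1) →
      (n.choose k : ZMod p) * f k = 0 := by
    intro f k _ hk'
    rw [Nat.choose_eq_zero_of_lt (by simpa using hk'), Nat.cast_zero, zero_mul]
  have trunc1 : ∑ k ∈ range p, (n.choose k : ZMod p) * (m.choose k : ZMod p) * (1-τ)^k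
      = ∑ k ∈ range (n+1), (n.choose k : ZMod p) * (m.choose k : ZMod p) * (1-τ)^k := by
    refine (Finset.sum_subset hsub ?_).symm
    intro k hk hk'
    rw [mul_assoc]
    exact vanish (fun k => (m.choose k : ZMod p) * (1-τ)^k) k hk hk'
  have trunc2 : ∑ k ∈ range p,
        (n.choose k : ZMod p) * ((-1)^k * (((m+k).choose k : ℕ) : ZMod p)) * (1-1/τ)^k
      = ∑ k ∈ range (n+1),
        (n.choose k : ZMod p) * ((-1)^k * (((m+k).choose k : ℕ) : ZMod p)) * (1-1/τ)^k := by
    refine (Finset.sum_subset hsub ?_).symm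
    intro k hk hk'
    rw [mul_assoc]
    exact vanish (fun k => (-1 : ZMod p)^k * (((m+k).choose k : ℕ) : ZMod p) * (1-1/τ)^k) k hk hk'
  rw [trunc1, trunc2, Finset.mul_sum]
  have step : ∀ k ∈ range (n+1),
      τ^n * ((n.choose k : ZMod p) * ((-1)^k * (((m+k).choose k : ℕ) : ZMod p)) * (1-1/τ)^k)
        = ((n.choose k * (m+k).choose k : ℕ) : ZMod p) * ((1-τ)^k * (1 - (1-τ))^(n-k)) := by
    intro k hk
    have hkn : k ≤ n := Nat.lt_succ_iff.mp (Finset.mem_range.mp hk)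
    have hτn : τ^n = τ^(n-k) * τ^k := by
      rw [← pow_add]
      congr 1
      omega
    have hkey : (-1 : ZMod p)^k * ((1-1/τ)^k * τ^k) = (1-τ)^k := by
      rw [← mul_pow, ← mul_pow]
      congr 1
      field_simp
      ring
    have h1τ : (1 - (1-τ)) = τ := by ring
    rw [h1τ, hτn]
    push_cast
    calc τ ^ (n - k) * τ ^ k * ((n.choose k : ZMod p) * ((-1)^k * (((m+k).choose k : ℕ) : ZMod p)) * (1-1/τ)^k)
        = (n.choose k : ZMod p) * (((m+k).choose k : ℕ) : ZMod p) * ((-1 : ZMod p)^k * ((1-1/τ)^k * τ^k)) * τ^(n-k) := by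
          push_cast
          ring
      _ = (n.choose k : ZMod p) * (((m+k).choose k : ℕ) : ZMod p) * ((1-τ)^k * τ^(n-k)) := by
          rw [hkey]
          ring
  rw [Finset.sum_congr rfl step, poly_id (1-τ) n m]
  refine Finset.sum_congr rfl fun k hk => ?_
  push_cast
  ring

end main

theorem sum_twelfth_congr (p : ℕ) (hp : p.Prime) (hp3 : 3 < p)
    (t : ℚ) (ht : pInt p t) (ht0 : ¬ pCong p t 0)
    (n : ℕ) (hn : n < p) (han : pCong p (-1/12) n) :
    pCong p
      (∑ k ∈ Finset.range p, gchoose (-1/12) k * gchoose (-5/12) k * (1 - t) ^ k)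
      (t ^ n *
        ∑ k ∈ Finset.range p, gchoose (-1/12) k * gchoose (-7/12) k * (1 - 1/t) ^ k) := by
  haveI : Fact p.Prime := ⟨hp⟩
  -- p does not divide 12
  have h12 : ¬ p ∣ 12 := by
    intro hd
    have hle : p ≤ 12 := Nat.le_of_dvd (by norm_num) hd
    interval_cases p
    all_goals first
      | exact absurd hp (by decide)
      | exact absurd hd (by decide)
  -- p-integrality of the constants
  have e1 : (-1/12 : ℚ) = ((-1 : ℤ) : ℚ) / ((12 : ℕ) : ℚ) := by norm_num
  have e5 : (-5/12 : ℚ) = ((-5 : ℤ) : ℚ) / ((12 : ℕ) : ℚ) := by norm_num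
  have e7 : (-7/12 : ℚ) = ((-7 : ℤ) : ℚ) / ((12 : ℕ) : ℚ) := by norm_num
  have ha1 : pInt p (-1/12 : ℚ) := by
    rw [e1]; exact pInt_div_nat hp (pInt_intCast hp _) h12
  have ha5 : pInt p (-5/12 : ℚ) := by
    rw [e5]; exact pInt_div_nat hp (pInt_intCast hp _) h12
  have ha7 : pInt p (-7/12 : ℚ) := by
    rw [e7]; exact pInt_div_nat hp (pInt_intCast hp _) h12
  -- facts about t
  have htne : t ≠ 0 := by
    intro h
    exact ht0 ⟨0, pInt_zero hp, by rw [h]; ring⟩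
  have hφt : phi p t ≠ 0 := by
    intro h
    exact ht0 (pcong_of_phi hp ht (pInt_zero hp) (by rw [h, phi_zero]))
  have htnum : ¬ (p : ℤ) ∣ t.num := by
    intro h
    apply hφt
    rw [phi, (ZMod.intCast_zmod_eq_zero_iff_dvd _ _).mpr h, zero_mul]
  have htnumq : (t.num : ℚ) ≠ 0 := by
    intro h
    exact htne (by rw [← Rat.num_div_den t, (by exact_mod_cast h : (t.num : ℚ) = 0), zero_div])
  have hinv_eq : (1/t) * ((t.num : ℤ) : ℚ) = (((t.den : ℕ) : ℤ) : ℚ) := by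
    push_cast
    have h2 : (1/t) * (t.num : ℚ) = (t.num : ℚ) / t := by ring
    rw [h2, div_eq_iff htne]
    linear_combination - rat_mul_den t
  have hpinv : pInt p (1/t) := by
    intro h
    have hd : ((Rat.divInt (t.den : ℤ) t.num).den : ℤ) ∣ t.num := Rat.den_dvd (t.den : ℤ) t.num
    rw [Rat.divInt_eq_div] at hd
    have heq : ((t.den : ℤ) : ℚ) / ((t.num : ℤ) : ℚ) = 1/t := by
      rw [div_eq_iff (by exact_mod_cast htnumq), ← hinv_eq]
    rw [heq] at hd
    exact htnum (dvd_trans (by exact_mod_cast h) hd)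
  have hφinv : phi p (1/t) = (phi p t)⁻¹ := by
    rw [phi_eval hpinv _ _ htnum hinv_eq, phi, mul_inv_rev, inv_inv]
    push_cast
    ring
  -- residues
  have hφ1 : phi p (-1/12 : ℚ) = (n : ZMod p) := by
    rw [phi_of_pcong hp ha1 (pInt_natCast hp n) han, phi_natCast]
  set m : ℕ := (phi p (-5/12 : ℚ)).val with hmdef
  have hφ5 : phi p (-5/12 : ℚ) = (m : ZMod p) := by
    rw [hmdef, ZMod.natCast_val, ZMod.cast_id]
  have hmlt : m < p := ZMod.val_lt _
  have hφ7 : phi p (-7/12 : ℚ) = -1 - (m : ZMod p) := by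
    have h75 : (-7/12 : ℚ) = ((-1 : ℤ) : ℚ) - (-5/12 : ℚ) := by norm_num
    rw [h75, phi_sub hp (pInt_intCast hp _) ha5, phi_intCast, hφ5]
    push_cast
    ring
  -- p-integrality of the sums
  have hterm1 : ∀ k ∈ Finset.range p, pInt p (gchoose (-1/12) k * gchoose (-5/12) k * (1 - t) ^ k) := by
    intro k hk
    have hkp : k < p := Finset.mem_range.mp hk
    exact pInt_mul hp (pInt_mul hp (pInt_gchoose hp ha1 hkp) (pInt_gchoose hp ha5 hkp))
      (pInt_pow hp (pInt_sub hp (pInt_one hp) ht) k)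
  have hterm2 : ∀ k ∈ Finset.range p, pInt p (gchoose (-1/12) k * gchoose (-7/12) k * (1 - 1/t) ^ k) := by
    intro k hk
    have hkp : k < p := Finset.mem_range.mp hk
    exact pInt_mul hp (pInt_mul hp (pInt_gchoose hp ha1 hkp) (pInt_gchoose hp ha7 hkp))
      (pInt_pow hp (pInt_sub hp (pInt_one hp) hpinv) k)
  have hS1 : pInt p (∑ k ∈ Finset.range p, gchoose (-1/12) k * gchoose (-5/12) k * (1 - t) ^ k) :=
    pInt_sum hp hterm1
  have hS2 : pInt p (t ^ n *
      ∑ k ∈ Finset.range p, gchoose (-1/12) k * gchoose (-7/12) k * (1 - 1/t) ^ k) :=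
    pInt_mul hp (pInt_pow hp ht n) (pInt_sum hp hterm2)
  refine pcong_of_phi hp hS1 hS2 ?_
  -- compute phi of both sides
  have hφ1t : phi p (1 - t) = 1 - phi p t := by
    rw [phi_sub hp (pInt_one hp) ht, phi_one]
  have hφ1invt : phi p (1 - 1/t) = 1 - 1/(phi p t) := by
    rw [phi_sub hp (pInt_one hp) hpinv, phi_one, hφinv, one_div]
  have hL : phi p (∑ k ∈ Finset.range p, gchoose (-1/12) k * gchoose (-5/12) k * (1 - t) ^ k)
      = ∑ k ∈ Finset.range p,
          (n.choose k : ZMod p) * (m.choose k : ZMod p) * (1 - phi p t)^k := by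
    rw [phi_sum hp _ _ hterm1]
    refine Finset.sum_congr rfl fun k hk => ?_
    have hkp : k < p := Finset.mem_range.mp hk
    rw [phi_mul hp (pInt_mul hp (pInt_gchoose hp ha1 hkp) (pInt_gchoose hp ha5 hkp))
        (pInt_pow hp (pInt_sub hp (pInt_one hp) ht) k),
      phi_mul hp (pInt_gchoose hp ha1 hkp) (pInt_gchoose hp ha5 hkp),
      phi_pow hp (pInt_sub hp (pInt_one hp) ht) k, hφ1t,
      phi_gchoose hp ha1 hkp, phi_gchoose hp ha5 hkp, hφ1, hφ5,
      choose_form hp n k hkp, choose_form hp m k hkp]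
  have hR : phi p (t ^ n *
        ∑ k ∈ Finset.range p, gchoose (-1/12) k * gchoose (-7/12) k * (1 - 1/t) ^ k)
      = (phi p t)^n * ∑ k ∈ Finset.range p,
          (n.choose k : ZMod p) * ((-1)^k * (((m+k).choose k : ℕ) : ZMod p)) * (1 - 1/(phi p t))^k := by
    rw [phi_mul hp (pInt_pow hp ht n) (pInt_sum hp hterm2), phi_pow hp ht n,
      phi_sum hp _ _ hterm2]
    congr 1
    refine Finset.sum_congr rfl fun k hk => ?_
    have hkp : k < p := Finset.mem_range.mp hk
    rw [phi_mul hp (pInt_mul hp (pInt_gchoose hp ha1 hkp) (pInt_gchoose hp ha7 hkp))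
        (pInt_pow hp (pInt_sub hp (pInt_one hp) hpinv) k),
      phi_mul hp (pInt_gchoose hp ha1 hkp) (pInt_gchoose hp ha7 hkp),
      phi_pow hp (pInt_sub hp (pInt_one hp) hpinv) k, hφ1invt,
      phi_gchoose hp ha1 hkp, phi_gchoose hp ha7 hkp, hφ1, hφ7,
      choose_form hp n k hkp, choose_form2 hp m k hkp]
  rw [hL, hR]
  exact core hp n m hn (phi p t) hφt
end
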